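/- Let A be a finite-dimensional algebra over a field k, let e, f, f' be idempotents of A, and suppose that Hom_k(f A, k) ≅ A f' as left A-modules, where Hom_k(fA, k) carries the left A-action (a · φ)(x) := φ(xa). Then the endofunctor (A e ⊗_k f A) ⊗_A − of the category of left A-modules is left adjoint to the endofunctor (A f' ⊗_k e A) ⊗_A −, where A e ⊗_k f A and A f' ⊗_k e A carry the A-A-bimodule structures a · (x ⊗ y) · b := ax ⊗ yb. -/

import Mathlib

open TensorProduct

set_option maxHeartbeats 1000000
set_option synthInstance.maxHeartbeats 400000
set_option linter.unusedSectionVars false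

universe u v

section

variable (k A : Type u) [Field k] [Ring A] [Algebra k A]

/-- The left ideal `A e` of `A`, as a `k`-subspace. -/
noncomputable def leftIdeal (e : A) : Submodule k A :=
  LinearMap.range (LinearMap.mulRight k e)

/-- The right ideal `e A` of `A`, as a `k`-subspace. -/
noncomputable def rightIdeal (e : A) : Submodule k A :=
  LinearMap.range (LinearMap.mulLeft k e)

/-- Left multiplication by `a` on the left ideal `A e` (the left `A`-action on `A e`). -/
noncomputable def lmulIdeal (e a : A) : leftIdeal k A e →ₗ[k] leftIdeal k A e :=
  (LinearMap.mulLeft k a).restrict (by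
    rintro x ⟨y, rfl⟩
    exact ⟨a * y, by simp [LinearMap.mulRight_apply, mul_assoc]⟩)

/-- Right multiplication by `a` on the right ideal `e A`; it induces the left `A`-action
`(a · ψ)(x) = ψ(x a)` on the dual `Hom_k(eA, k)`. -/
noncomputable def rmulIdeal (e a : A) : rightIdeal k A e →ₗ[k] rightIdeal k A e :=
  (LinearMap.mulRight k a).restrict (by
    rintro x ⟨y, rfl⟩
    exact ⟨y * a, by simp [LinearMap.mulLeft_apply, mul_assoc]⟩)

/-- The `A`-`A`-bimodule `A e ⊗[k] f A`, realised inside `A ⊗[k] A`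
(with bimodule structure `a · (x ⊗ y) · b = ax ⊗ yb`). -/
noncomputable def projBimod (e f : A) : Submodule k (A ⊗[k] A) :=
  LinearMap.range (TensorProduct.map (LinearMap.mulRight k e) (LinearMap.mulLeft k f))

section Bimod

variable (X : Type u) [AddCommGroup X] [Module k X]
  [Module A X] [Module Aᵐᵒᵖ X] [IsScalarTower k A X] [IsScalarTower k Aᵐᵒᵖ X]
  [SMulCommClass A Aᵐᵒᵖ X]

variable (M : Type v) [AddCommGroup M] [Module k M] [Module A M] [IsScalarTower k A M]

/-- The balancing relations defining `X ⊗_A M` for an `A`-`A`-bimodule `X` and a left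
`A`-module `M`. -/
noncomputable def relF : Submodule k (X ⊗[k] M) :=
  Submodule.span k {z | ∃ (a : A) (w : X) (m : M),
    z = (MulOpposite.op a • w) ⊗ₜ[k] m - w ⊗ₜ[k] (a • m)}

/-- The value `X ⊗_A M` of the functor `X ⊗_A −` on a left `A`-module `M`. -/
abbrev QF := (X ⊗[k] M) ⧸ relF k A X M

/-- Left multiplication by `a ∈ A` on `X`, as a `k`-linear map. -/
noncomputable def lsmulX (a : A) : X →ₗ[k] X :=
  (Algebra.lsmul k k X : A →ₐ[k] Module.End k X) a

lemma relF_le_comap_lact (a : A) :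
    relF k A X M ≤ (relF k A X M).comap
      (TensorProduct.map (lsmulX k A X a) LinearMap.id) := by
  refine Submodule.span_le.mpr ?_
  rintro z ⟨b, w, m, rfl⟩
  simp only [Submodule.mem_comap, map_sub, TensorProduct.map_tmul, LinearMap.id_coe, id_eq,
    SetLike.mem_coe, lsmulX, Algebra.lsmul_coe]
  rw [smul_comm]
  exact Submodule.subset_span ⟨b, a • w, m, rfl⟩

/-- The left `A`-action on `X ⊗_A M` (through the left action on `X`). -/
noncomputable def LactF (a : A) : QF k A X M →ₗ[k] QF k A X M :=
  Submodule.mapQ _ _ (TensorProduct.map (lsmulX k A X a) LinearMap.id)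
    (relF_le_comap_lact k A X M a)

end Bimod

section Funct

variable (X : Type u) [AddCommGroup X] [Module k X]
  [Module A X] [Module Aᵐᵒᵖ X] [IsScalarTower k A X] [IsScalarTower k Aᵐᵒᵖ X]
  [SMulCommClass A Aᵐᵒᵖ X]

variable {M M' : Type v} [AddCommGroup M] [Module k M] [Module A M] [IsScalarTower k A M]
  [AddCommGroup M'] [Module k M'] [Module A M'] [IsScalarTower k A M']

lemma relF_le_comap_map (χ : M →ₗ[k] M') (hχ : ∀ (a : A) (m : M), χ (a • m) = a • χ m) :
    relF k A X M ≤ (relF k A X M').comap (TensorProduct.map LinearMap.id χ) := by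
  refine Submodule.span_le.mpr ?_
  rintro z ⟨b, w, m, rfl⟩
  simp only [Submodule.mem_comap, map_sub, TensorProduct.map_tmul, LinearMap.id_coe, id_eq,
    SetLike.mem_coe, hχ]
  exact Submodule.subset_span ⟨b, w, χ m, rfl⟩

/-- Functoriality of `X ⊗_A −` in the module variable. -/
noncomputable def mapF (χ : M →ₗ[k] M') (hχ : ∀ (a : A) (m : M), χ (a • m) = a • χ m) :
    QF k A X M →ₗ[k] QF k A X M' :=
  Submodule.mapQ _ _ (TensorProduct.map LinearMap.id χ) (relF_le_comap_map k A X χ hχ)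

lemma mapF_LactF_comm (χ : M →ₗ[k] M') (hχ : ∀ (a : A) (m : M), χ (a • m) = a • χ m)
    (a : A) :
    (mapF k A X χ hχ) ∘ₗ (LactF k A X M a) = (LactF k A X M' a) ∘ₗ (mapF k A X χ hχ) := by
  refine Submodule.linearMap_qext _ ?_
  refine TensorProduct.ext' fun w m => ?_
  simp [mapF, LactF, Submodule.mapQ_apply]

end Funct

section Homs

variable (X Y : Type u) [AddCommGroup X] [Module k X]
  [Module A X] [Module Aᵐᵒᵖ X] [IsScalarTower k A X] [IsScalarTower k Aᵐᵒᵖ X]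
  [SMulCommClass A Aᵐᵒᵖ X]
  [AddCommGroup Y] [Module k Y]
  [Module A Y] [Module Aᵐᵒᵖ Y] [IsScalarTower k A Y] [IsScalarTower k Aᵐᵒᵖ Y]
  [SMulCommClass A Aᵐᵒᵖ Y]

/-- The hom-set `Hom_A(X ⊗_A M, N)` of left `A`-module maps. -/
abbrev HomF (M N : Type v) [AddCommGroup M] [Module k M] [Module A M] [IsScalarTower k A M]
    [AddCommGroup N] [Module k N] [Module A N] [IsScalarTower k A N] :=
  {φ : QF k A X M →ₗ[k] N // ∀ (a : A) (q : QF k A X M), φ (LactF k A X M a q) = a • φ q}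

/-- The hom-set `Hom_A(M, Y ⊗_A N)` of left `A`-module maps. -/
abbrev HomG (M N : Type v) [AddCommGroup M] [Module k M] [Module A M] [IsScalarTower k A M]
    [AddCommGroup N] [Module k N] [Module A N] [IsScalarTower k A N] :=
  {ψ : M →ₗ[k] QF k A Y N // ∀ (a : A) (m : M), ψ (a • m) = LactF k A Y N a (ψ m)}

variable {M M' N N' : Type v} [AddCommGroup M] [Module k M] [Module A M] [IsScalarTower k A M]
  [AddCommGroup M'] [Module k M'] [Module A M'] [IsScalarTower k A M']
  [AddCommGroup N] [Module k N] [Module A N] [IsScalarTower k A N]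
  [AddCommGroup N'] [Module k N'] [Module A N'] [IsScalarTower k A N']

/-- Post-composition with an `A`-linear map `N → N'` on `Hom_A(X ⊗_A M, N)`. -/
noncomputable def postcompHomF (χ : N →ₗ[k] N') (hχ : ∀ (a : A) (n : N), χ (a • n) = a • χ n)
    (φ : HomF k A X M N) : HomF k A X M N' :=
  ⟨χ ∘ₗ φ.1, fun a q => by
    simp only [LinearMap.comp_apply, φ.2 a q, hχ]⟩

/-- Pre-composition with (the image under the functor `X ⊗_A −` of) an `A`-linear map
`M' → M` on `Hom_A(X ⊗_A M, N)`. -/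
noncomputable def precompHomF (χ : M' →ₗ[k] M) (hχ : ∀ (a : A) (m : M'), χ (a • m) = a • χ m)
    (φ : HomF k A X M N) : HomF k A X M' N :=
  ⟨φ.1 ∘ₗ mapF k A X χ hχ, fun a q => by
    have h := congrArg (fun (F : QF k A X M' →ₗ[k] QF k A X M) => φ.1 (F q))
      (mapF_LactF_comm k A X χ hχ a)
    simp only [LinearMap.comp_apply] at h
    simp only [LinearMap.comp_apply, h, φ.2]⟩

end Homs

section GenAux

variable {E F : A} {Z : Type u} [AddCommGroup Z] [Module k Z]
  [Module A Z] [Module Aᵐᵒᵖ Z] [IsScalarTower k A Z] [IsScalarTower k Aᵐᵒᵖ Z]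
  [SMulCommClass A Aᵐᵒᵖ Z]

lemma mem_projBimod (a b : A) : (a * E) ⊗ₜ[k] (F * b) ∈ projBimod k A E F :=
  ⟨a ⊗ₜ b, by simp [TensorProduct.map_tmul]⟩

variable (ιZ : Z →ₗ[k] A ⊗[k] A) (hιZ : Function.Injective ιZ)
  (hZrange : LinearMap.range ιZ = projBimod k A E F)

/-- The element of `Z` corresponding to `(a E) ⊗ (F b)`. -/
noncomputable def gen (a b : A) : Z :=
  (LinearEquiv.ofInjective ιZ hιZ).symm
    ⟨(a * E) ⊗ₜ[k] (F * b), by rw [hZrange]; exact mem_projBimod k A a b⟩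

lemma ιZ_gen (a b : A) :
    ιZ (gen k A ιZ hιZ hZrange a b) = (a * E) ⊗ₜ[k] (F * b) := by
  rw [gen, ← LinearEquiv.ofInjective_apply ιZ (h := hιZ), LinearEquiv.apply_symm_apply]

lemma gen_span (x : Z) :
    x ∈ Submodule.span k {z : Z | ∃ a b, z = gen k A ιZ hιZ hZrange a b} := by
  have key : ∀ (t : A ⊗[k] A) (x : Z),
      TensorProduct.map (LinearMap.mulRight k E) (LinearMap.mulLeft k F) t = ιZ x →
      x ∈ Submodule.span k {z : Z | ∃ a b, z = gen k A ιZ hιZ hZrange a b} := by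
    intro t
    induction t using TensorProduct.induction_on with
    | zero =>
        intro x hx
        have : x = 0 := hιZ (by simp [← hx])
        simp [this]
    | tmul a b =>
        intro x hx
        have : x = gen k A ιZ hιZ hZrange a b := by
          apply hιZ
          rw [ιZ_gen, ← hx, TensorProduct.map_tmul, LinearMap.mulRight_apply,
            LinearMap.mulLeft_apply]
        exact this ▸ Submodule.subset_span ⟨a, b, rfl⟩
    | add t1 t2 ih1 ih2 =>
        intro x hx
        have h1 : TensorProduct.map (LinearMap.mulRight k E) (LinearMap.mulLeft k F) t1 ∈
            LinearMap.range ιZ := by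
          rw [hZrange]; exact ⟨t1, rfl⟩
        have h2 : TensorProduct.map (LinearMap.mulRight k E) (LinearMap.mulLeft k F) t2 ∈
            LinearMap.range ιZ := by
          rw [hZrange]; exact ⟨t2, rfl⟩
        obtain ⟨x1, hx1⟩ := h1
        obtain ⟨x2, hx2⟩ := h2
        have : x = x1 + x2 := hιZ (by rw [map_add, hx1, hx2, ← hx, map_add])
        exact this ▸ Submodule.add_mem _ (ih1 x1 hx1.symm) (ih2 x2 hx2.symm)
  have : ιZ x ∈ projBimod k A E F := by rw [← hZrange]; exact ⟨x, rfl⟩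
  obtain ⟨t, ht⟩ := this
  exact key t x ht

lemma smul_gen (hZl : ∀ (a : A) (z : Z), ιZ (a • z) =
      TensorProduct.map (LinearMap.mulLeft k a) LinearMap.id (ιZ z)) (a' a b : A) :
    a' • gen k A ιZ hιZ hZrange a b = gen k A ιZ hιZ hZrange (a' * a) b := by
  apply hιZ
  rw [hZl, ιZ_gen, ιZ_gen, TensorProduct.map_tmul]
  simp [mul_assoc]

lemma opsmul_gen (hZr : ∀ (b : A) (z : Z), ιZ (MulOpposite.op b • z) =
      TensorProduct.map LinearMap.id (LinearMap.mulRight k b) (ιZ z)) (b' a b : A) :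
    MulOpposite.op b' • gen k A ιZ hιZ hZrange a b = gen k A ιZ hιZ hZrange a (b * b') := by
  apply hιZ
  rw [hZr, ιZ_gen, ιZ_gen, TensorProduct.map_tmul]
  simp [mul_assoc]

lemma gen_mulE (hE : IsIdempotentElem E) (a b : A) :
    gen k A ιZ hιZ hZrange (a * E) b = gen k A ιZ hιZ hZrange a b := by
  apply hιZ
  rw [ιZ_gen, ιZ_gen, mul_assoc, hE.eq]

lemma gen_Fmul (hF : IsIdempotentElem F) (a b : A) :
    gen k A ιZ hιZ hZrange a (F * b) = gen k A ιZ hιZ hZrange a b := by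
  apply hιZ
  rw [ιZ_gen, ιZ_gen, ← mul_assoc, hF.eq]

/-- `b ↦ gen 1 b` as a linear map. -/
noncomputable def genR : A →ₗ[k] Z where
  toFun b := gen k A ιZ hιZ hZrange 1 b
  map_add' b b' := by
    apply hιZ
    simp [ιZ_gen, mul_add, TensorProduct.tmul_add]
  map_smul' s b := by
    apply hιZ
    simp [ιZ_gen, mul_smul_comm, TensorProduct.tmul_smul]

/-- `a ↦ gen a 1` as a linear map. -/
noncomputable def genL : A →ₗ[k] Z where
  toFun a := gen k A ιZ hιZ hZrange a 1
  map_add' a a' := by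
    apply hιZ
    simp [ιZ_gen, add_mul, TensorProduct.add_tmul]
  map_smul' s a := by
    apply hιZ
    simp [ιZ_gen, smul_mul_assoc, TensorProduct.smul_tmul']

lemma genR_apply (b : A) : genR k A ιZ hιZ hZrange b = gen k A ιZ hιZ hZrange 1 b := rfl

lemma genL_apply (a : A) : genL k A ιZ hιZ hZrange a = gen k A ιZ hιZ hZrange a 1 := rfl

end GenAux
section PairAux

variable {f f' : A}

/-- `v ↦ ⟨f * v⟩` into the right ideal. -/
noncomputable def emR (f : A) : A →ₗ[k] rightIdeal k A f :=
  LinearMap.codRestrict _ (LinearMap.mulLeft k f) (fun v => ⟨v, rfl⟩)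

/-- `c ↦ ⟨c * f'⟩` into the left ideal. -/
noncomputable def emL (f' : A) : A →ₗ[k] leftIdeal k A f' :=
  LinearMap.codRestrict _ (LinearMap.mulRight k f') (fun c => ⟨c, rfl⟩)

lemma emR_coe (v : A) : (emR k A f v : A) = f * v := rfl
lemma emL_coe (c : A) : (emL k A f' c : A) = c * f' := rfl

variable (Θ : (rightIdeal k A f →ₗ[k] k) ≃ₗ[k] leftIdeal k A f')

/-- The pairing `A × A → k`, `(v, c) ↦ Θ⁻¹⟨c f'⟩ ⟨f v⟩`. -/
noncomputable def pr : A →ₗ[k] A →ₗ[k] k :=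
  (Θ.symm.toLinearMap ∘ₗ emL k A f').flip ∘ₗ emR k A f

lemma pr_apply (v c : A) : pr k A Θ v c = Θ.symm (emL k A f' c) (emR k A f v) := rfl

lemma lmulIdeal_coe (a : A) (w : leftIdeal k A f') :
    (lmulIdeal k A f' a w : A) = a * (w : A) := rfl

lemma rmulIdeal_coe (a : A) (w : rightIdeal k A f) :
    (rmulIdeal k A f a w : A) = (w : A) * a := rfl

lemma mem_leftIdeal_mul (hf' : IsIdempotentElem f') (w : leftIdeal k A f') :
    (w : A) * f' = (w : A) := by
  obtain ⟨y, hy⟩ := w.2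
  rw [← hy, LinearMap.mulRight_apply, mul_assoc, hf'.eq]

lemma mem_rightIdeal_mul (hf : IsIdempotentElem f) (w : rightIdeal k A f) :
    f * (w : A) = (w : A) := by
  obtain ⟨y, hy⟩ := w.2
  rw [← hy, LinearMap.mulLeft_apply, ← mul_assoc, hf.eq]

lemma theta_symm_lmul (hΘ : ∀ (a : A) (ψ : rightIdeal k A f →ₗ[k] k),
    Θ (ψ ∘ₗ rmulIdeal k A f a) = lmulIdeal k A f' a (Θ ψ)) (a : A) (w : leftIdeal k A f') :
    Θ.symm (lmulIdeal k A f' a w) = (Θ.symm w) ∘ₗ rmulIdeal k A f a := by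
  have h := hΘ a (Θ.symm w)
  rw [Θ.apply_symm_apply] at h
  rw [← h, Θ.symm_apply_apply]

lemma pr_assoc (hΘ : ∀ (a : A) (ψ : rightIdeal k A f →ₗ[k] k),
    Θ (ψ ∘ₗ rmulIdeal k A f a) = lmulIdeal k A f' a (Θ ψ)) (v a c : A) : pr k A Θ (v * a) c = pr k A Θ v (a * c) := by
  have h1 : emL k A f' (a * c) = lmulIdeal k A f' a (emL k A f' c) := by
    apply Subtype.ext
    rw [emL_coe, lmulIdeal_coe, emL_coe, mul_assoc]
  have h2 : rmulIdeal k A f a (emR k A f v) = emR k A f (v * a) := by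
    apply Subtype.ext
    rw [rmulIdeal_coe, emR_coe, emR_coe, mul_assoc]
  rw [pr_apply, pr_apply, h1, theta_symm_lmul k A Θ hΘ, LinearMap.comp_apply, h2]

lemma pr_fmul (hf : IsIdempotentElem f) (v c : A) :
    pr k A Θ (f * v) c = pr k A Θ v c := by
  have h : emR k A f (f * v) = emR k A f v := by
    apply Subtype.ext
    rw [emR_coe, emR_coe, ← mul_assoc, hf.eq]
  rw [pr_apply, pr_apply, h]

lemma pr_mulf' (hf' : IsIdempotentElem f') (v c : A) :
    pr k A Θ v (c * f') = pr k A Θ v c := by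
  have h : emL k A f' (c * f') = emL k A f' c := by
    apply Subtype.ext
    rw [emL_coe, emL_coe, mul_assoc, hf'.eq]
  rw [pr_apply, pr_apply, h]

lemma pr_theta (hf' : IsIdempotentElem f') (ρ : rightIdeal k A f →ₗ[k] k) (v : A) :
    pr k A Θ v ((Θ ρ : A)) = ρ (emR k A f v) := by
  have h : emL k A f' ((Θ ρ : A)) = Θ ρ := by
    apply Subtype.ext
    rw [emL_coe, mem_leftIdeal_mul k A hf']
  rw [pr_apply, h, Θ.symm_apply_apply]

lemma emR_of_mem (hf : IsIdempotentElem f) (w : rightIdeal k A f) :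
    emR k A f (w : A) = w := by
  apply Subtype.ext
  rw [emR_coe, mem_rightIdeal_mul k A hf]

end PairAux
section EtaAux

variable {f f' : A} (Θ : (rightIdeal k A f →ₗ[k] k) ≃ₗ[k] leftIdeal k A f')
variable (N : Type v) [AddCommGroup N] [Module k N] [Module A N] [IsScalarTower k A N]

/-- The `A`-action on `N` as a `k`-bilinear map. -/
noncomputable def actN : A →ₗ[k] N →ₗ[k] N :=
  LinearMap.mk₂ k (· • ·) add_smul (fun s a n => smul_assoc s a n) smul_add
    (fun a s n => smul_comm s a n)

lemma actN_apply (a : A) (n : N) : actN k A N a n = a • n := rfl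

/-- `eta1 u v (c ⊗ d) n = pr v c • (u * d) • n`. -/
noncomputable def eta1 (u v : A) : (A ⊗[k] A) →ₗ[k] N →ₗ[k] N :=
  TensorProduct.lift (LinearMap.mk₂ k (fun c d => pr k A Θ v c • actN k A N (u * d))
    (fun c c' d => by rw [map_add, add_smul])
    (fun s c d => by rw [map_smul, smul_assoc])
    (fun c d d' => by rw [mul_add, map_add, smul_add])
    (fun s c d => by rw [mul_smul_comm, map_smul, smul_comm]))

lemma eta1_tmul (u v c d : A) (n : N) :
    eta1 k A Θ N u v (c ⊗ₜ[k] d) n = pr k A Θ v c • (u * d) • n := by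
  simp [eta1, actN_apply]

/-- `eta2 (u ⊗ v) (c ⊗ d) n = pr v c • (u * d) • n`. -/
noncomputable def eta2 : (A ⊗[k] A) →ₗ[k] (A ⊗[k] A) →ₗ[k] N →ₗ[k] N :=
  TensorProduct.lift (LinearMap.mk₂ k (eta1 k A Θ N)
    (fun u u' v => by
      apply TensorProduct.ext'
      intro c d
      ext n
      simp only [eta1_tmul, LinearMap.add_apply, add_mul, add_smul, smul_add])
    (fun s u v => by
      apply TensorProduct.ext'
      intro c d
      ext n
      simp only [eta1_tmul, LinearMap.smul_apply, smul_mul_assoc, smul_assoc]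
      rw [smul_comm])
    (fun u v v' => by
      apply TensorProduct.ext'
      intro c d
      ext n
      simp only [eta1_tmul, LinearMap.add_apply, map_add, LinearMap.add_apply, add_smul])
    (fun s u v => by
      apply TensorProduct.ext'
      intro c d
      ext n
      simp only [eta1_tmul, LinearMap.smul_apply, map_smul, LinearMap.smul_apply, smul_assoc]))

lemma eta2_tmul (u v c d : A) (n : N) :
    eta2 k A Θ N (u ⊗ₜ[k] v) (c ⊗ₜ[k] d) n = pr k A Θ v c • (u * d) • n := by
  simp [eta2, eta1_tmul]

lemma eta2_op (a : A) (tX tY : A ⊗[k] A) (n : N) :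
    eta2 k A Θ N tX (TensorProduct.map LinearMap.id (LinearMap.mulRight k a) tY) n =
      eta2 k A Θ N tX tY (a • n) := by
  induction tX using TensorProduct.induction_on with
  | zero => simp
  | add t1 t2 ih1 ih2 => simp only [map_add, LinearMap.add_apply, ih1, ih2]
  | tmul u v =>
    induction tY using TensorProduct.induction_on with
    | zero => simp
    | add s1 s2 ih1 ih2 => simp only [map_add, LinearMap.add_apply, ih1, ih2]
    | tmul c d =>
      rw [TensorProduct.map_tmul, LinearMap.id_apply, LinearMap.mulRight_apply,
        eta2_tmul, eta2_tmul, ← mul_assoc, mul_smul]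

lemma eta2_swap (hΘ : ∀ (a : A) (ψ : rightIdeal k A f →ₗ[k] k),
      Θ (ψ ∘ₗ rmulIdeal k A f a) = lmulIdeal k A f' a (Θ ψ))
    (a : A) (tX tY : A ⊗[k] A) (n : N) :
    eta2 k A Θ N (TensorProduct.map LinearMap.id (LinearMap.mulRight k a) tX) tY n =
      eta2 k A Θ N tX (TensorProduct.map (LinearMap.mulLeft k a) LinearMap.id tY) n := by
  induction tX using TensorProduct.induction_on with
  | zero => simp
  | add t1 t2 ih1 ih2 => simp only [map_add, LinearMap.add_apply, ih1, ih2]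
  | tmul u v =>
    induction tY using TensorProduct.induction_on with
    | zero => simp
    | add s1 s2 ih1 ih2 => simp only [map_add, LinearMap.add_apply, ih1, ih2]
    | tmul c d =>
      rw [TensorProduct.map_tmul, TensorProduct.map_tmul, LinearMap.id_apply,
        LinearMap.id_apply, LinearMap.mulRight_apply, LinearMap.mulLeft_apply,
        eta2_tmul, eta2_tmul, pr_assoc k A Θ hΘ]

lemma eta2_lsmul (a : A) (tX tY : A ⊗[k] A) (n : N) :
    eta2 k A Θ N (TensorProduct.map (LinearMap.mulLeft k a) LinearMap.id tX) tY n =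
      a • eta2 k A Θ N tX tY n := by
  induction tX using TensorProduct.induction_on with
  | zero => simp
  | add t1 t2 ih1 ih2 =>
      simp only [map_add, LinearMap.add_apply, ih1, ih2, smul_add]
  | tmul u v =>
    induction tY using TensorProduct.induction_on with
    | zero => simp
    | add s1 s2 ih1 ih2 =>
        simp only [map_add, LinearMap.add_apply, ih1, ih2, smul_add]
    | tmul c d =>
      rw [TensorProduct.map_tmul, LinearMap.id_apply, LinearMap.mulLeft_apply,
        eta2_tmul, eta2_tmul, mul_assoc, mul_smul, smul_comm]

end EtaAux
section QFAux

variable (X : Type u) [AddCommGroup X] [Module k X]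
  [Module A X] [Module Aᵐᵒᵖ X] [IsScalarTower k A X] [IsScalarTower k Aᵐᵒᵖ X]
  [SMulCommClass A Aᵐᵒᵖ X]
variable (M : Type v) [AddCommGroup M] [Module k M] [Module A M] [IsScalarTower k A M]

lemma LactF_mk (a : A) (x : X) (m : M) :
    LactF k A X M a (Submodule.Quotient.mk (x ⊗ₜ[k] m)) =
      Submodule.Quotient.mk ((a • x) ⊗ₜ[k] m) := by
  rw [LactF, Submodule.mapQ_apply, TensorProduct.map_tmul, LinearMap.id_apply]
  congr 1

lemma mk_rel (a : A) (x : X) (m : M) :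
    (Submodule.Quotient.mk ((MulOpposite.op a • x) ⊗ₜ[k] m) : QF k A X M) =
      Submodule.Quotient.mk (x ⊗ₜ[k] (a • m)) :=
  (Submodule.Quotient.eq _).2 (Submodule.subset_span ⟨a, x, m, rfl⟩)

end QFAux

section EpsAux

variable {e f f' : A} (Θ : (rightIdeal k A f →ₗ[k] k) ≃ₗ[k] leftIdeal k A f')
variable {X Y : Type u} [AddCommGroup X] [Module k X]
  [Module A X] [Module Aᵐᵒᵖ X] [IsScalarTower k A X] [IsScalarTower k Aᵐᵒᵖ X]
  [SMulCommClass A Aᵐᵒᵖ X]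
  [AddCommGroup Y] [Module k Y]
  [Module A Y] [Module Aᵐᵒᵖ Y] [IsScalarTower k A Y] [IsScalarTower k Aᵐᵒᵖ Y]
  [SMulCommClass A Aᵐᵒᵖ Y]
variable (ιX : X →ₗ[k] A ⊗[k] A) (ιY : Y →ₗ[k] A ⊗[k] A)
variable (N : Type v) [AddCommGroup N] [Module k N] [Module A N] [IsScalarTower k A N]

/-- evaluation `X ⊗ (Y ⊗ N) → N` before descending. -/
noncomputable def eps0 : X →ₗ[k] (Y ⊗[k] N) →ₗ[k] N :=
  (TensorProduct.lift.equiv (RingHom.id k) Y N N).toLinearMap ∘ₗ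
    ((LinearMap.llcomp k Y (A ⊗[k] A) (N →ₗ[k] N)).flip ιY) ∘ₗ (eta2 k A Θ N) ∘ₗ ιX

lemma eps0_tmul (x : X) (y : Y) (n : N) :
    eps0 k A Θ ιX ιY N x (y ⊗ₜ[k] n) = eta2 k A Θ N (ιX x) (ιY y) n := by
  simp [eps0]

lemma eps0_rel
    (hYr : ∀ (b : A) (y : Y), ιY (MulOpposite.op b • y) =
      TensorProduct.map LinearMap.id (LinearMap.mulRight k b) (ιY y)) (x : X) :
    relF k A Y N ≤ LinearMap.ker (eps0 k A Θ ιX ιY N x) := by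
  rw [relF, Submodule.span_le]
  rintro z ⟨a, w, n, rfl⟩
  simp only [SetLike.mem_coe, LinearMap.mem_ker, map_sub, eps0_tmul, sub_eq_zero]
  rw [hYr, eta2_op]

variable (hYr : ∀ (b : A) (y : Y), ιY (MulOpposite.op b • y) =
      TensorProduct.map LinearMap.id (LinearMap.mulRight k b) (ιY y))

/-- the evaluation `X ⊗ (Y ⊗_A N) → N`. -/
noncomputable def epsQ : X →ₗ[k] QF k A Y N →ₗ[k] N where
  toFun x := Submodule.liftQ _ (eps0 k A Θ ιX ιY N x) (eps0_rel k A Θ ιX ιY N hYr x)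
  map_add' x x' := by
    refine Submodule.linearMap_qext _ ?_
    ext z
    simp [map_add]
  map_smul' s x := by
    refine Submodule.linearMap_qext _ ?_
    ext z
    simp [map_smul]

lemma epsQ_mk (x : X) (y : Y) (n : N) :
    epsQ k A Θ ιX ιY N hYr x (Submodule.Quotient.mk (y ⊗ₜ[k] n)) =
      eta2 k A Θ N (ιX x) (ιY y) n := by
  show Submodule.liftQ _ _ _ _ = _
  rw [Submodule.liftQ_apply, eps0_tmul]

lemma epsQ_lact
    (hΘ : ∀ (a : A) (ψ : rightIdeal k A f →ₗ[k] k),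
      Θ (ψ ∘ₗ rmulIdeal k A f a) = lmulIdeal k A f' a (Θ ψ))
    (hXr : ∀ (b : A) (x : X), ιX (MulOpposite.op b • x) =
      TensorProduct.map LinearMap.id (LinearMap.mulRight k b) (ιX x))
    (hYl : ∀ (a : A) (y : Y), ιY (a • y) =
      TensorProduct.map (LinearMap.mulLeft k a) LinearMap.id (ιY y))
    (a : A) (x : X) (q : QF k A Y N) :
    epsQ k A Θ ιX ιY N hYr x (LactF k A Y N a q) =
      epsQ k A Θ ιX ιY N hYr (MulOpposite.op a • x) q := by
  obtain ⟨z, rfl⟩ := Submodule.Quotient.mk_surjective _ q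
  induction z using TensorProduct.induction_on with
  | zero =>
      rw [Submodule.Quotient.mk_zero]
      simp
  | tmul y n =>
      rw [LactF_mk, epsQ_mk, epsQ_mk, hXr, hYl]
      exact (eta2_swap k A Θ N hΘ a (ιX x) (ιY y) n).symm
  | add z1 z2 ih1 ih2 =>
      rw [Submodule.Quotient.mk_add, map_add, map_add, map_add, ih1, ih2]

lemma epsQ_smul
    (hXl : ∀ (a : A) (x : X), ιX (a • x) =
      TensorProduct.map (LinearMap.mulLeft k a) LinearMap.id (ιX x))
    (a : A) (x : X) (q : QF k A Y N) :
    epsQ k A Θ ιX ιY N hYr (a • x) q = a • epsQ k A Θ ιX ιY N hYr x q := by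
  obtain ⟨z, rfl⟩ := Submodule.Quotient.mk_surjective _ q
  induction z using TensorProduct.induction_on with
  | zero =>
      rw [Submodule.Quotient.mk_zero]
      simp
  | tmul y n =>
      rw [epsQ_mk, epsQ_mk, hXl, eta2_lsmul]
  | add z1 z2 ih1 ih2 =>
      rw [Submodule.Quotient.mk_add, map_add, map_add, ih1, ih2, smul_add]

end EpsAux
section BasisAux

variable [FiniteDimensional k A] (f : A)

/-- A basis of the right ideal `f A`. -/
noncomputable def bas : Module.Basis (Fin (Module.finrank k (rightIdeal k A f))) k
    (rightIdeal k A f) := Module.finBasis k _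

lemma dual_expand (ρ : rightIdeal k A f →ₗ[k] k) :
    ∑ i, ρ (bas k A f i) • (bas k A f).coord i = ρ := by
  refine (bas k A f).ext fun j => ?_
  simp [Module.Basis.coord_apply, Module.Basis.repr_self, Finsupp.single_apply]

lemma basis_expand (w : rightIdeal k A f) :
    ∑ i, (bas k A f).coord i w • bas k A f i = w := by
  simp only [Module.Basis.coord_apply]
  exact (bas k A f).sum_repr w

end BasisAux

section FwdAux

variable [FiniteDimensional k A] {e f f' : A}
variable (Θ : (rightIdeal k A f →ₗ[k] k) ≃ₗ[k] leftIdeal k A f')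
variable {X Y : Type u} [AddCommGroup X] [Module k X]
  [Module A X] [Module Aᵐᵒᵖ X] [IsScalarTower k A X] [IsScalarTower k Aᵐᵒᵖ X]
  [SMulCommClass A Aᵐᵒᵖ X]
  [AddCommGroup Y] [Module k Y]
  [Module A Y] [Module Aᵐᵒᵖ Y] [IsScalarTower k A Y] [IsScalarTower k Aᵐᵒᵖ Y]
  [SMulCommClass A Aᵐᵒᵖ Y]
variable (ιX : X →ₗ[k] A ⊗[k] A) (hιX : Function.Injective ιX)
  (hXrange : LinearMap.range ιX = projBimod k A e f)
variable (ιY : Y →ₗ[k] A ⊗[k] A) (hιY : Function.Injective ιY)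
  (hYrange : LinearMap.range ιY = projBimod k A f' e)
variable {M N : Type v} [AddCommGroup M] [Module k M] [Module A M] [IsScalarTower k A M]
  [AddCommGroup N] [Module k N] [Module A N] [IsScalarTower k A N]

/-- `T2 φ0 z m = φ0 [gen 1 z ⊗ m]`. -/
noncomputable def T2 (φ0 : QF k A X M →ₗ[k] N) : rightIdeal k A f →ₗ[k] M →ₗ[k] N :=
  LinearMap.llcomp k M (QF k A X M) N φ0 ∘ₗ
    (LinearMap.llcomp k M (X ⊗[k] M) (QF k A X M) (relF k A X M).mkQ ∘ₗ
      TensorProduct.mk k X M) ∘ₗ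
    genR k A ιX hιX hXrange ∘ₗ (rightIdeal k A f).subtype

lemma T2_apply (φ0 : QF k A X M →ₗ[k] N) (z : rightIdeal k A f) (m : M) :
    T2 k A ιX hιX hXrange φ0 z m =
      φ0 (Submodule.Quotient.mk (gen k A ιX hιX hXrange 1 (z : A) ⊗ₜ[k] m)) := rfl

/-- `B2 ρ n = [gen (Θ ρ) 1 ⊗ n]`. -/
noncomputable def B2 : (rightIdeal k A f →ₗ[k] k) →ₗ[k] N →ₗ[k] QF k A Y N :=
  (LinearMap.llcomp k N (Y ⊗[k] N) (QF k A Y N) (relF k A Y N).mkQ ∘ₗ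
      TensorProduct.mk k Y N) ∘ₗ
    genL k A ιY hιY hYrange ∘ₗ (leftIdeal k A f').subtype ∘ₗ Θ.toLinearMap

lemma B2_apply (ρ : rightIdeal k A f →ₗ[k] k) (n : N) :
    B2 k A Θ ιY hιY hYrange ρ n =
      Submodule.Quotient.mk (gen k A ιY hιY hYrange ((Θ ρ : A)) 1 ⊗ₜ[k] n) := rfl

/-- The forward map (unit side) on raw linear maps. -/
noncomputable def fwd0 (φ0 : QF k A X M →ₗ[k] N) : M →ₗ[k] QF k A Y N :=
  ∑ i, (B2 k A Θ ιY hιY hYrange (N := N) ((bas k A f).coord i)) ∘ₗ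
    (T2 k A ιX hιX hXrange φ0 (bas k A f i))

lemma fwd0_apply (φ0 : QF k A X M →ₗ[k] N) (m : M) :
    fwd0 k A Θ ιX hιX hXrange ιY hιY hYrange φ0 m =
      ∑ i, B2 k A Θ ιY hιY hYrange ((bas k A f).coord i)
        (T2 k A ιX hιX hXrange φ0 (bas k A f i) m) := by
  simp [fwd0]

lemma B2_sum_swap (r : rightIdeal k A f →ₗ[k] rightIdeal k A f)
    (T : rightIdeal k A f →ₗ[k] N) :
    ∑ i, B2 k A Θ ιY hιY hYrange ((bas k A f).coord i ∘ₗ r) (T (bas k A f i)) =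
      ∑ i, B2 k A Θ ιY hιY hYrange ((bas k A f).coord i) (T (r (bas k A f i))) := by
  have h1 : ∀ i, (bas k A f).coord i ∘ₗ r =
      ∑ j, ((bas k A f).coord i (r (bas k A f j))) • (bas k A f).coord j := by
    intro i
    exact (dual_expand k A f ((bas k A f).coord i ∘ₗ r)).symm
  calc ∑ i, B2 k A Θ ιY hιY hYrange ((bas k A f).coord i ∘ₗ r) (T (bas k A f i))
      = ∑ i, ∑ j, ((bas k A f).coord i (r (bas k A f j))) •
          B2 k A Θ ιY hιY hYrange ((bas k A f).coord j) (T (bas k A f i)) := by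
        refine Finset.sum_congr rfl fun i _ => ?_
        rw [h1 i, map_sum, LinearMap.sum_apply]
        refine Finset.sum_congr rfl fun j _ => ?_
        rw [map_smul, LinearMap.smul_apply]
    _ = ∑ j, ∑ i, ((bas k A f).coord i (r (bas k A f j))) •
          B2 k A Θ ιY hιY hYrange ((bas k A f).coord j) (T (bas k A f i)) :=
        Finset.sum_comm
    _ = ∑ j, B2 k A Θ ιY hιY hYrange ((bas k A f).coord j) (T (r (bas k A f j))) := by
        refine Finset.sum_congr rfl fun j _ => ?_
        conv_rhs => rw [← basis_expand k A f (r (bas k A f j))]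
        rw [map_sum, map_sum]
        refine Finset.sum_congr rfl fun i _ => ?_
        rw [map_smul, map_smul]

end FwdAux
section MapsAux

variable [FiniteDimensional k A] {e f f' : A}
variable (Θ : (rightIdeal k A f →ₗ[k] k) ≃ₗ[k] leftIdeal k A f')
variable {X Y : Type u} [AddCommGroup X] [Module k X]
  [Module A X] [Module Aᵐᵒᵖ X] [IsScalarTower k A X] [IsScalarTower k Aᵐᵒᵖ X]
  [SMulCommClass A Aᵐᵒᵖ X]
  [AddCommGroup Y] [Module k Y]
  [Module A Y] [Module Aᵐᵒᵖ Y] [IsScalarTower k A Y] [IsScalarTower k Aᵐᵒᵖ Y]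
  [SMulCommClass A Aᵐᵒᵖ Y]
variable (ιX : X →ₗ[k] A ⊗[k] A) (hιX : Function.Injective ιX)
  (hXrange : LinearMap.range ιX = projBimod k A e f)
variable (ιY : Y →ₗ[k] A ⊗[k] A) (hιY : Function.Injective ιY)
  (hYrange : LinearMap.range ιY = projBimod k A f' e)
variable (hXl : ∀ (a : A) (x : X), ιX (a • x) =
      TensorProduct.map (LinearMap.mulLeft k a) LinearMap.id (ιX x))
variable (hXr : ∀ (b : A) (x : X), ιX (MulOpposite.op b • x) =
      TensorProduct.map LinearMap.id (LinearMap.mulRight k b) (ιX x))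
variable (hYl : ∀ (a : A) (y : Y), ιY (a • y) =
      TensorProduct.map (LinearMap.mulLeft k a) LinearMap.id (ιY y))
variable (hYr : ∀ (b : A) (y : Y), ιY (MulOpposite.op b • y) =
      TensorProduct.map LinearMap.id (LinearMap.mulRight k b) (ιY y))
variable (hΘ : ∀ (a : A) (ψ : rightIdeal k A f →ₗ[k] k),
      Θ (ψ ∘ₗ rmulIdeal k A f a) = lmulIdeal k A f' a (Θ ψ))
variable {M N : Type v} [AddCommGroup M] [Module k M] [Module A M] [IsScalarTower k A M]
  [AddCommGroup N] [Module k N] [Module A N] [IsScalarTower k A N]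

section
include hXr

lemma T2_shift (φ0 : QF k A X M →ₗ[k] N) (z : rightIdeal k A f) (a : A) (m : M) :
    T2 k A ιX hιX hXrange φ0 z (a • m) =
      T2 k A ιX hιX hXrange φ0 (rmulIdeal k A f a z) m := by
  rw [T2_apply, T2_apply, rmulIdeal_coe,
    ← opsmul_gen k A ιX hιX hXrange hXr a 1 (z : A), mk_rel]

end

section
include hYl hΘ

lemma Lact_B2 (a : A) (ρ : rightIdeal k A f →ₗ[k] k) (n : N) :
    LactF k A Y N a (B2 k A Θ ιY hιY hYrange ρ n) =
      B2 k A Θ ιY hιY hYrange (ρ ∘ₗ rmulIdeal k A f a) n := by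
  rw [B2_apply, LactF_mk, B2_apply]
  have hc : ((Θ (ρ ∘ₗ rmulIdeal k A f a) : A)) = a * ((Θ ρ : A)) := by
    rw [hΘ, lmulIdeal_coe]
  rw [hc, ← smul_gen k A ιY hιY hYrange hYl a ((Θ ρ : A)) 1]

end

section
include hXr hYl hΘ

lemma fwd0_equiv (φ0 : QF k A X M →ₗ[k] N) (a : A) (m : M) :
    fwd0 k A Θ ιX hιX hXrange ιY hιY hYrange φ0 (a • m) =
      LactF k A Y N a (fwd0 k A Θ ιX hιX hXrange ιY hιY hYrange φ0 m) := by
  calc fwd0 k A Θ ιX hιX hXrange ιY hιY hYrange φ0 (a • m)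
      = ∑ i, B2 k A Θ ιY hιY hYrange ((bas k A f).coord i)
          (((T2 k A ιX hιX hXrange φ0).flip m) (rmulIdeal k A f a (bas k A f i))) := by
        rw [fwd0_apply]
        exact Finset.sum_congr rfl fun i _ => by
          rw [T2_shift k A ιX hιX hXrange hXr]; rfl
    _ = ∑ i, B2 k A Θ ιY hιY hYrange ((bas k A f).coord i ∘ₗ rmulIdeal k A f a)
          (((T2 k A ιX hιX hXrange φ0).flip m) (bas k A f i)) :=
        (B2_sum_swap k A Θ ιY hιY hYrange (rmulIdeal k A f a) _).symm
    _ = LactF k A Y N a (fwd0 k A Θ ιX hιX hXrange ιY hιY hYrange φ0 m) := by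
        rw [fwd0_apply, map_sum]
        exact Finset.sum_congr rfl fun i _ =>
          (Lact_B2 k A Θ ιY hιY hYrange hYl hΘ a _ _).symm

end

/-- the forward map of the adjunction. -/
noncomputable def fwd (φ : HomF k A X M N) : HomG k A Y M N :=
  ⟨fwd0 k A Θ ιX hιX hXrange ιY hιY hYrange φ.1, fun a m =>
    fwd0_equiv k A Θ ιX hιX hXrange ιY hιY hYrange hXr hYl hΘ φ.1 a m⟩

/-- the backward map (counit side) on raw data. -/
noncomputable def bwd0 (ψ0 : M →ₗ[k] QF k A Y N)
    (hψ : ∀ (a : A) (m : M), ψ0 (a • m) = LactF k A Y N a (ψ0 m)) :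
    QF k A X M →ₗ[k] N :=
  Submodule.liftQ _ (TensorProduct.lift
    (((LinearMap.llcomp k M (QF k A Y N) N).flip ψ0) ∘ₗ epsQ k A Θ ιX ιY N hYr))
    (by
      rw [relF, Submodule.span_le]
      rintro z ⟨a, w, m, rfl⟩
      simp only [SetLike.mem_coe, LinearMap.mem_ker, map_sub, TensorProduct.lift.tmul,
        LinearMap.comp_apply, LinearMap.flip_apply, LinearMap.llcomp_apply, sub_eq_zero]
      rw [hψ, epsQ_lact k A Θ ιX ιY N hYr hΘ hXr hYl])

lemma bwd0_apply (ψ0 : M →ₗ[k] QF k A Y N)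
    (hψ : ∀ (a : A) (m : M), ψ0 (a • m) = LactF k A Y N a (ψ0 m)) (x : X) (m : M) :
    bwd0 k A Θ ιX ιY hXr hYl hYr hΘ ψ0 hψ (Submodule.Quotient.mk (x ⊗ₜ[k] m)) =
      epsQ k A Θ ιX ιY N hYr x (ψ0 m) := by
  rw [bwd0, Submodule.liftQ_apply, TensorProduct.lift.tmul]
  rfl

section
include hXl

lemma bwd0_equiv (ψ0 : M →ₗ[k] QF k A Y N)
    (hψ : ∀ (a : A) (m : M), ψ0 (a • m) = LactF k A Y N a (ψ0 m)) (a : A)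
    (q : QF k A X M) :
    bwd0 k A Θ ιX ιY hXr hYl hYr hΘ ψ0 hψ (LactF k A X M a q) =
      a • bwd0 k A Θ ιX ιY hXr hYl hYr hΘ ψ0 hψ q := by
  obtain ⟨z, rfl⟩ := Submodule.Quotient.mk_surjective _ q
  induction z using TensorProduct.induction_on with
  | zero => rw [Submodule.Quotient.mk_zero]; simp
  | tmul x m =>
      rw [LactF_mk, bwd0_apply, bwd0_apply, epsQ_smul k A Θ ιX ιY N hYr hXl]
  | add z1 z2 ih1 ih2 =>
      simp only [Submodule.Quotient.mk_add, map_add, ih1, ih2, smul_add]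

end

/-- the backward map of the adjunction. -/
noncomputable def bwd (ψ : HomG k A Y M N) : HomF k A X M N :=
  ⟨bwd0 k A Θ ιX ιY hXr hYl hYr hΘ ψ.1 ψ.2, fun a q =>
    bwd0_equiv k A Θ ιX ιY hXl hXr hYl hYr hΘ ψ.1 ψ.2 a q⟩

end MapsAux
section InvAux

variable [FiniteDimensional k A] {e f f' : A}
variable (Θ : (rightIdeal k A f →ₗ[k] k) ≃ₗ[k] leftIdeal k A f')
variable {X Y : Type u} [AddCommGroup X] [Module k X]
  [Module A X] [Module Aᵐᵒᵖ X] [IsScalarTower k A X] [IsScalarTower k Aᵐᵒᵖ X]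
  [SMulCommClass A Aᵐᵒᵖ X]
  [AddCommGroup Y] [Module k Y]
  [Module A Y] [Module Aᵐᵒᵖ Y] [IsScalarTower k A Y] [IsScalarTower k Aᵐᵒᵖ Y]
  [SMulCommClass A Aᵐᵒᵖ Y]
variable (ιX : X →ₗ[k] A ⊗[k] A) (hιX : Function.Injective ιX)
  (hXrange : LinearMap.range ιX = projBimod k A e f)
variable (ιY : Y →ₗ[k] A ⊗[k] A) (hιY : Function.Injective ιY)
  (hYrange : LinearMap.range ιY = projBimod k A f' e)
variable (hXl : ∀ (a : A) (x : X), ιX (a • x) =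
      TensorProduct.map (LinearMap.mulLeft k a) LinearMap.id (ιX x))
variable (hXr : ∀ (b : A) (x : X), ιX (MulOpposite.op b • x) =
      TensorProduct.map LinearMap.id (LinearMap.mulRight k b) (ιX x))
variable (hYl : ∀ (a : A) (y : Y), ιY (a • y) =
      TensorProduct.map (LinearMap.mulLeft k a) LinearMap.id (ιY y))
variable (hYr : ∀ (b : A) (y : Y), ιY (MulOpposite.op b • y) =
      TensorProduct.map LinearMap.id (LinearMap.mulRight k b) (ιY y))
variable (hΘ : ∀ (a : A) (ψ : rightIdeal k A f →ₗ[k] k),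
      Θ (ψ ∘ₗ rmulIdeal k A f a) = lmulIdeal k A f' a (Θ ψ))
variable (he : IsIdempotentElem e) (hf : IsIdempotentElem f) (hf' : IsIdempotentElem f')
variable {M N : Type v} [AddCommGroup M] [Module k M] [Module A M] [IsScalarTower k A M]
  [AddCommGroup N] [Module k N] [Module A N] [IsScalarTower k A N]

section
include hXl hΘ he hf hf'

lemma bwd_fwd (φ : HomF k A X M N) :
    bwd k A Θ ιX ιY hXl hXr hYl hYr hΘ
      (fwd k A Θ ιX hιX hXrange ιY hιY hYrange hXr hYl hΘ φ) = φ := by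
  apply Subtype.ext
  refine Submodule.linearMap_qext _ ?_
  refine TensorProduct.ext' fun x m => ?_
  simp only [LinearMap.comp_apply, Submodule.mkQ_apply]
  show bwd0 k A Θ ιX ιY hXr hYl hYr hΘ
      (fwd k A Θ ιX hιX hXrange ιY hιY hYrange hXr hYl hΘ φ).1
      (fwd k A Θ ιX hιX hXrange ιY hιY hYrange hXr hYl hΘ φ).2
      (Submodule.Quotient.mk (x ⊗ₜ[k] m)) =
    φ.1 (Submodule.Quotient.mk (x ⊗ₜ[k] m))
  have hx := gen_span k A ιX hιX hXrange x
  refine Submodule.span_induction ?_ ?_ ?_ ?_ hx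
  · rintro x ⟨a, b, rfl⟩
    rw [bwd0_apply]
    show epsQ k A Θ ιX ιY N hYr _ (fwd0 k A Θ ιX hιX hXrange ιY hιY hYrange φ.1 m) = _
    rw [fwd0_apply, map_sum]
    have hterm : ∀ i, epsQ k A Θ ιX ιY N hYr (gen k A ιX hιX hXrange a b)
        (B2 k A Θ ιY hιY hYrange ((bas k A f).coord i)
          (T2 k A ιX hιX hXrange φ.1 (bas k A f i) m)) =
        (bas k A f).coord i (emR k A f b) •
          (a * e) • T2 k A ιX hιX hXrange φ.1 (bas k A f i) m := by
      intro i
      rw [B2_apply, epsQ_mk, ιZ_gen, ιZ_gen, eta2_tmul,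
        pr_fmul k A Θ hf, pr_mulf' k A Θ hf', pr_theta k A Θ hf',
        mul_one, mul_assoc, he.eq]
    rw [Finset.sum_congr rfl fun i _ => hterm i]
    have hsum : ∑ i, (bas k A f).coord i (emR k A f b) •
        (a * e) • T2 k A ιX hιX hXrange φ.1 (bas k A f i) m =
        (a * e) • T2 k A ιX hιX hXrange φ.1 (emR k A f b) m := by
      conv_rhs => rw [← basis_expand k A f (emR k A f b), map_sum,
        LinearMap.sum_apply, Finset.smul_sum]
      refine Finset.sum_congr rfl fun i _ => ?_
      rw [(T2 k A ιX hιX hXrange φ.1).map_smul, LinearMap.smul_apply]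
      exact smul_comm _ _ _
    rw [hsum]
    have hgen : gen k A ιX hιX hXrange a b = (a * e) • gen k A ιX hιX hXrange 1 b := by
      rw [smul_gen k A ιX hιX hXrange hXl (a * e) 1 b, mul_one,
        gen_mulE k A ιX hιX hXrange he]
    rw [hgen, ← LactF_mk, φ.2]
    congr 1
    rw [T2_apply, emR_coe, gen_Fmul k A ιX hιX hXrange hf]
  · simp
  · intro x y _ _ hx hy
    simp only [TensorProduct.add_tmul, Submodule.Quotient.mk_add, map_add, hx, hy]
  · intro s x _ hx
    rw [← TensorProduct.smul_tmul', Submodule.Quotient.mk_smul, map_smul, map_smul, hx]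

end

/-- The composite `Λ : Y ⊗_A N → Y ⊗_A N` given by counit-then-unit. -/
noncomputable def Lam : QF k A Y N →ₗ[k] QF k A Y N :=
  ∑ i, (B2 k A Θ ιY hιY hYrange ((bas k A f).coord i)) ∘ₗ
    (epsQ k A Θ ιX ιY N hYr (gen k A ιX hιX hXrange 1 ((bas k A f i : A))))

section
include hΘ he hf hf'

lemma Lam_eq_id :
    Lam k A Θ ιX hιX hXrange ιY hιY hYrange hYr (N := N) = LinearMap.id := by
  refine Submodule.linearMap_qext _ ?_
  refine TensorProduct.ext' fun y n => ?_
  simp only [LinearMap.comp_apply, Submodule.mkQ_apply, LinearMap.id_apply]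
  have hy := gen_span k A ιY hιY hYrange y
  refine Submodule.span_induction ?_ ?_ ?_ ?_ hy
  · rintro y ⟨c, d, rfl⟩
    rw [Lam, LinearMap.sum_apply]
    have hterm : ∀ i, ((B2 k A Θ ιY hιY hYrange ((bas k A f).coord i)) ∘ₗ
        (epsQ k A Θ ιX ιY N hYr (gen k A ιX hιX hXrange 1 ((bas k A f i : A)))))
          (Submodule.Quotient.mk (gen k A ιY hιY hYrange c d ⊗ₜ[k] n)) =
        (Θ.symm (emL k A f' c)) (bas k A f i) •
          B2 k A Θ ιY hιY hYrange ((bas k A f).coord i) ((e * d) • n) := by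
      intro i
      rw [LinearMap.comp_apply, epsQ_mk, ιZ_gen, ιZ_gen, eta2_tmul,
        pr_fmul k A Θ hf, pr_mulf' k A Θ hf', one_mul, ← mul_assoc, he.eq,
        map_smul, pr_apply, emR_of_mem k A hf]
    rw [Finset.sum_congr rfl fun i _ => hterm i]
    have hsum : ∑ i, (Θ.symm (emL k A f' c)) (bas k A f i) •
        B2 k A Θ ιY hιY hYrange ((bas k A f).coord i) ((e * d) • n) =
        B2 k A Θ ιY hιY hYrange (Θ.symm (emL k A f' c)) ((e * d) • n) := by
      conv_rhs => rw [← dual_expand k A f (Θ.symm (emL k A f' c))]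
      rw [map_sum, LinearMap.sum_apply]
      refine Finset.sum_congr rfl fun i _ => ?_
      rw [(B2 k A Θ ιY hιY hYrange (N := N)).map_smul, LinearMap.smul_apply]
    rw [hsum, B2_apply, Θ.apply_symm_apply, emL_coe, ← mk_rel,
      opsmul_gen k A ιY hιY hYrange hYr, one_mul,
      gen_mulE k A ιY hιY hYrange hf', gen_Fmul k A ιY hιY hYrange he]
  · simp
  · intro x y _ _ hx hy
    simp only [TensorProduct.add_tmul, Submodule.Quotient.mk_add, map_add, hx, hy]
  · intro s x _ hx
    rw [← TensorProduct.smul_tmul', Submodule.Quotient.mk_smul, map_smul, hx]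

lemma fwd_bwd (ψ : HomG k A Y M N) :
    fwd k A Θ ιX hιX hXrange ιY hιY hYrange hXr hYl hΘ
      (bwd k A Θ ιX ιY hXl hXr hYl hYr hΘ ψ) = ψ := by
  apply Subtype.ext
  apply LinearMap.ext
  intro m
  show fwd0 k A Θ ιX hιX hXrange ιY hιY hYrange
      (bwd0 k A Θ ιX ιY hXr hYl hYr hΘ ψ.1 ψ.2) m = ψ.1 m
  have hL : fwd0 k A Θ ιX hιX hXrange ιY hιY hYrange
      (bwd0 k A Θ ιX ιY hXr hYl hYr hΘ ψ.1 ψ.2) m =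
      Lam k A Θ ιX hιX hXrange ιY hιY hYrange hYr (ψ.1 m) := by
    rw [fwd0_apply, Lam, LinearMap.sum_apply]
    refine Finset.sum_congr rfl fun i _ => ?_
    rw [LinearMap.comp_apply]
    congr 1
  rw [hL, Lam_eq_id k A Θ ιX hιX hXrange ιY hιY hYrange hYr hΘ he hf hf',
    LinearMap.id_apply]

end

end InvAux
section NatAux

variable (X : Type u) [AddCommGroup X] [Module k X]
  [Module A X] [Module Aᵐᵒᵖ X] [IsScalarTower k A X] [IsScalarTower k Aᵐᵒᵖ X]
  [SMulCommClass A Aᵐᵒᵖ X]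
variable {M M' : Type v} [AddCommGroup M] [Module k M] [Module A M] [IsScalarTower k A M]
  [AddCommGroup M'] [Module k M'] [Module A M'] [IsScalarTower k A M']

lemma mapF_mk (χ : M →ₗ[k] M') (hχ : ∀ (a : A) (m : M), χ (a • m) = a • χ m)
    (x : X) (m : M) :
    mapF k A X χ hχ (Submodule.Quotient.mk (x ⊗ₜ[k] m)) =
      Submodule.Quotient.mk (x ⊗ₜ[k] (χ m)) := by
  rw [mapF, Submodule.mapQ_apply, TensorProduct.map_tmul, LinearMap.id_apply]

end NatAux

section Nat2Aux

variable [FiniteDimensional k A] {e f f' : A}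
variable (Θ : (rightIdeal k A f →ₗ[k] k) ≃ₗ[k] leftIdeal k A f')
variable {X Y : Type u} [AddCommGroup X] [Module k X]
  [Module A X] [Module Aᵐᵒᵖ X] [IsScalarTower k A X] [IsScalarTower k Aᵐᵒᵖ X]
  [SMulCommClass A Aᵐᵒᵖ X]
  [AddCommGroup Y] [Module k Y]
  [Module A Y] [Module Aᵐᵒᵖ Y] [IsScalarTower k A Y] [IsScalarTower k Aᵐᵒᵖ Y]
  [SMulCommClass A Aᵐᵒᵖ Y]
variable (ιX : X →ₗ[k] A ⊗[k] A) (hιX : Function.Injective ιX)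
  (hXrange : LinearMap.range ιX = projBimod k A e f)
variable (ιY : Y →ₗ[k] A ⊗[k] A) (hιY : Function.Injective ιY)
  (hYrange : LinearMap.range ιY = projBimod k A f' e)
variable (hXr : ∀ (b : A) (x : X), ιX (MulOpposite.op b • x) =
      TensorProduct.map LinearMap.id (LinearMap.mulRight k b) (ιX x))
variable (hYl : ∀ (a : A) (y : Y), ιY (a • y) =
      TensorProduct.map (LinearMap.mulLeft k a) LinearMap.id (ιY y))
variable (hΘ : ∀ (a : A) (ψ : rightIdeal k A f →ₗ[k] k),
      Θ (ψ ∘ₗ rmulIdeal k A f a) = lmulIdeal k A f' a (Θ ψ))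
variable {M M' N N' : Type v}
  [AddCommGroup M] [Module k M] [Module A M] [IsScalarTower k A M]
  [AddCommGroup M'] [Module k M'] [Module A M'] [IsScalarTower k A M']
  [AddCommGroup N] [Module k N] [Module A N] [IsScalarTower k A N]
  [AddCommGroup N'] [Module k N'] [Module A N'] [IsScalarTower k A N']

lemma fwd_natN (χ : N →ₗ[k] N') (hχ : ∀ (a : A) (n : N), χ (a • n) = a • χ n)
    (φ : HomF k A X M N) :
    (fwd k A Θ ιX hιX hXrange ιY hιY hYrange hXr hYl hΘ
        (postcompHomF k A X χ hχ φ)).1 =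
      mapF k A Y χ hχ ∘ₗ
        (fwd k A Θ ιX hιX hXrange ιY hιY hYrange hXr hYl hΘ φ).1 := by
  apply LinearMap.ext
  intro m
  show fwd0 k A Θ ιX hιX hXrange ιY hιY hYrange (postcompHomF k A X χ hχ φ).1 m =
    mapF k A Y χ hχ (fwd0 k A Θ ιX hιX hXrange ιY hιY hYrange φ.1 m)
  rw [fwd0_apply, fwd0_apply, map_sum]
  refine Finset.sum_congr rfl fun i _ => ?_
  have h1 : T2 k A ιX hιX hXrange (postcompHomF k A X χ hχ φ).1 (bas k A f i) m =
      χ (T2 k A ιX hιX hXrange φ.1 (bas k A f i) m) := rfl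
  rw [h1, B2_apply, B2_apply, mapF_mk]

lemma fwd_natM (χ : M' →ₗ[k] M) (hχ : ∀ (a : A) (m : M'), χ (a • m) = a • χ m)
    (φ : HomF k A X M N) :
    (fwd k A Θ ιX hιX hXrange ιY hιY hYrange hXr hYl hΘ
        (precompHomF k A X χ hχ φ)).1 =
      (fwd k A Θ ιX hιX hXrange ιY hιY hYrange hXr hYl hΘ φ).1 ∘ₗ χ := by
  apply LinearMap.ext
  intro m'
  show fwd0 k A Θ ιX hιX hXrange ιY hιY hYrange (precompHomF k A X χ hχ φ).1 m' =
    fwd0 k A Θ ιX hιX hXrange ιY hιY hYrange φ.1 (χ m')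
  rw [fwd0_apply, fwd0_apply]
  refine Finset.sum_congr rfl fun i _ => ?_
  congr 1

end Nat2Aux
/-- Let `A` be a finite-dimensional `k`-algebra and `e, f, f'` idempotents
of `A` such that `Hom_k(fA, k) ≅ A f'` as left `A`-modules.  Let `X` be (a bimodule
isomorphic to) `A e ⊗[k] f A` and `Y` be (a bimodule isomorphic to) `A f' ⊗[k] e A`.
Then the endofunctor `X ⊗_A −` of the category of left `A`-modules is left adjoint to the
endofunctor `Y ⊗_A −`: there is a family of bijections
`Hom_A((Ae ⊗ fA) ⊗_A M, N) ≃ Hom_A(M, (Af' ⊗ eA) ⊗_A N)`, natural in `M` and in `N`. -/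
theorem tensor_functor_adjunction
    [FiniteDimensional k A] (e f f' : A)
    (he : IsIdempotentElem e) (hf : IsIdempotentElem f) (hf' : IsIdempotentElem f')
    (hdual : ∃ Θ : (rightIdeal k A f →ₗ[k] k) ≃ₗ[k] leftIdeal k A f',
      ∀ (a : A) (ψ : rightIdeal k A f →ₗ[k] k),
        Θ (ψ ∘ₗ rmulIdeal k A f a) = lmulIdeal k A f' a (Θ ψ))
    (X Y : Type u) [AddCommGroup X] [Module k X]
    [Module A X] [Module Aᵐᵒᵖ X] [IsScalarTower k A X] [IsScalarTower k Aᵐᵒᵖ X]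
    [SMulCommClass A Aᵐᵒᵖ X]
    [AddCommGroup Y] [Module k Y]
    [Module A Y] [Module Aᵐᵒᵖ Y] [IsScalarTower k A Y] [IsScalarTower k Aᵐᵒᵖ Y]
    [SMulCommClass A Aᵐᵒᵖ Y]
    (ιX : X →ₗ[k] A ⊗[k] A) (hιX : Function.Injective ιX)
    (hXrange : LinearMap.range ιX = projBimod k A e f)
    (hXl : ∀ (a : A) (x : X), ιX (a • x) =
      TensorProduct.map (LinearMap.mulLeft k a) LinearMap.id (ιX x))
    (hXr : ∀ (b : A) (x : X), ιX (MulOpposite.op b • x) =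
      TensorProduct.map LinearMap.id (LinearMap.mulRight k b) (ιX x))
    (ιY : Y →ₗ[k] A ⊗[k] A) (hιY : Function.Injective ιY)
    (hYrange : LinearMap.range ιY = projBimod k A f' e)
    (hYl : ∀ (a : A) (y : Y), ιY (a • y) =
      TensorProduct.map (LinearMap.mulLeft k a) LinearMap.id (ιY y))
    (hYr : ∀ (b : A) (y : Y), ιY (MulOpposite.op b • y) =
      TensorProduct.map LinearMap.id (LinearMap.mulRight k b) (ιY y)) :
    ∃ θ : ∀ (M : Type v) [AddCommGroup M] [Module k M] [Module A M] [IsScalarTower k A M]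
        (N : Type v) [AddCommGroup N] [Module k N] [Module A N] [IsScalarTower k A N],
        HomF k A X M N ≃ HomG k A Y M N,
      -- naturality in `N`
      (∀ (M : Type v) [AddCommGroup M] [Module k M] [Module A M] [IsScalarTower k A M]
         (N N' : Type v) [AddCommGroup N] [Module k N] [Module A N] [IsScalarTower k A N]
         [AddCommGroup N'] [Module k N'] [Module A N'] [IsScalarTower k A N']
         (χ : N →ₗ[k] N') (hχ : ∀ (a : A) (n : N), χ (a • n) = a • χ n)
         (φ : HomF k A X M N),
         (θ M N' (postcompHomF k A X χ hχ φ)).1 =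
           (mapF k A Y χ hχ) ∘ₗ (θ M N φ).1) ∧
      -- naturality in `M`
      (∀ (M M' : Type v) [AddCommGroup M] [Module k M] [Module A M] [IsScalarTower k A M]
         [AddCommGroup M'] [Module k M'] [Module A M'] [IsScalarTower k A M']
         (N : Type v) [AddCommGroup N] [Module k N] [Module A N] [IsScalarTower k A N]
         (χ : M' →ₗ[k] M) (hχ : ∀ (a : A) (m : M'), χ (a • m) = a • χ m)
         (φ : HomF k A X M N),
         (θ M' N (precompHomF k A X χ hχ φ)).1 = (θ M N φ).1 ∘ₗ χ) := by
  obtain ⟨Θ, hΘ⟩ := hdual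
  refine ⟨fun M _ _ _ _ N _ _ _ _ =>
    ⟨fwd k A Θ ιX hιX hXrange ιY hιY hYrange hXr hYl hΘ,
     bwd k A Θ ιX ιY hXl hXr hYl hYr hΘ,
     fun φ => bwd_fwd k A Θ ιX hιX hXrange ιY hιY hYrange hXl hXr hYl hYr hΘ he hf hf' φ,
     fun ψ => fwd_bwd k A Θ ιX hιX hXrange ιY hιY hYrange hXl hXr hYl hYr hΘ he hf hf' ψ⟩,
    ?_, ?_⟩
  · intro M _ _ _ _ N N' _ _ _ _ _ _ _ _ χ hχ φ
    exact fwd_natN k A Θ ιX hιX hXrange ιY hιY hYrange hXr hYl hΘ χ hχ φ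
  · intro M M' _ _ _ _ _ _ _ _ N _ _ _ _ χ hχ φ
    exact fwd_natM k A Θ ιX hιX hXrange ιY hιY hYrange hXr hYl hΘ χ hχ φ

end
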